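/- Let d ≥ 1 and let M : ℝ → Matrix (Fin d) (Fin d) ℝ be such that for every t ≥ 0 the matrix M t is a symmetric graph Laplacian. Let y : ℝ → (Fin d → ℝ) satisfy HasDerivAt y (M t *ᵥ y t) t for every t ≥ 0. Then the squared Euclidean norm of the solution is nonincreasing: for all 0 ≤ s ≤ t, ∑_i (y t i)² ≤ ∑_i (y s i)². -/

import Mathlib

open Matrix

/-- An `n × n` real matrix is a graph Laplacian if its off-diagonal entries are
nonnegative, its diagonal entries are nonpositive, and each column sums to zero. -/
def IsGraphLaplacian {n : ℕ} (A : Matrix (Fin n) (Fin n) ℝ) : Prop :=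
  (∀ k ℓ : Fin n, k ≠ ℓ → 0 ≤ A k ℓ) ∧ (∀ k : Fin n, A k k ≤ 0) ∧
    (∀ ℓ : Fin n, ∑ k : Fin n, A k ℓ = 0)

lemma quad_nonpos {d : ℕ} (A : Matrix (Fin d) (Fin d) ℝ)
    (hA : IsGraphLaplacian A) (hs : A.IsSymm) (x : Fin d → ℝ) :
    ∑ k : Fin d, x k * (A *ᵥ x) k ≤ 0 := by
  obtain ⟨hoff, _, hcol⟩ := hA
  have hsym : ∀ k ℓ, A k ℓ = A ℓ k := fun k ℓ => Matrix.IsSymm.apply hs ℓ k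
  have hQ : ∑ k : Fin d, x k * (A *ᵥ x) k = ∑ k : Fin d, ∑ ℓ : Fin d, A k ℓ * x k * x ℓ := by
    simp only [mulVec, dotProduct, Finset.mul_sum]
    exact Finset.sum_congr rfl fun k _ => Finset.sum_congr rfl fun ℓ _ => by ring
  have S1 : ∑ k : Fin d, ∑ ℓ : Fin d, A k ℓ * x k ^ 2 = 0 := by
    calc ∑ k : Fin d, ∑ ℓ : Fin d, A k ℓ * x k ^ 2
        = ∑ k : Fin d, x k ^ 2 * ∑ ℓ : Fin d, A ℓ k := by
          refine Finset.sum_congr rfl fun k _ => ?_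
          rw [Finset.mul_sum]
          exact Finset.sum_congr rfl fun ℓ _ => by rw [hsym k ℓ]; ring
      _ = 0 := by simp [hcol]
  have S3 : ∑ k : Fin d, ∑ ℓ : Fin d, A k ℓ * x ℓ ^ 2 = 0 := by
    rw [Finset.sum_comm]
    calc ∑ ℓ : Fin d, ∑ k : Fin d, A k ℓ * x ℓ ^ 2
        = ∑ ℓ : Fin d, x ℓ ^ 2 * ∑ k : Fin d, A k ℓ := by
          refine Finset.sum_congr rfl fun ℓ _ => ?_
          rw [Finset.mul_sum]; exact Finset.sum_congr rfl fun k _ => by ring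
      _ = 0 := by simp [hcol]
  have key : ∑ k : Fin d, ∑ ℓ : Fin d, A k ℓ * (x k - x ℓ) ^ 2
      = -2 * ∑ k : Fin d, x k * (A *ᵥ x) k := by
    rw [hQ]
    have expand : ∀ k ℓ : Fin d, A k ℓ * (x k - x ℓ) ^ 2
        = A k ℓ * x k ^ 2 + A k ℓ * x ℓ ^ 2 - 2 * (A k ℓ * x k * x ℓ) := by
      intro k ℓ; ring
    calc ∑ k : Fin d, ∑ ℓ : Fin d, A k ℓ * (x k - x ℓ) ^ 2
        = (∑ k : Fin d, ∑ ℓ : Fin d, A k ℓ * x k ^ 2)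
          + (∑ k : Fin d, ∑ ℓ : Fin d, A k ℓ * x ℓ ^ 2)
          - 2 * ∑ k : Fin d, ∑ ℓ : Fin d, A k ℓ * x k * x ℓ := by
          simp only [expand, Finset.sum_sub_distrib, Finset.sum_add_distrib, Finset.mul_sum]
      _ = -2 * ∑ k : Fin d, ∑ ℓ : Fin d, A k ℓ * x k * x ℓ := by rw [S1, S3]; ring
  have hnn : 0 ≤ ∑ k : Fin d, ∑ ℓ : Fin d, A k ℓ * (x k - x ℓ) ^ 2 := by
    refine Finset.sum_nonneg fun k _ => Finset.sum_nonneg fun ℓ _ => ?_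
    rcases eq_or_ne k ℓ with rfl | h
    · simp
    · exact mul_nonneg (hoff k ℓ h) (sq_nonneg _)
  nlinarith [key, hnn]

/-- Proposition 3: if `M t` is a symmetric graph Laplacian for every `t ≥ 0`, the
squared Euclidean norm of a solution of `y' = M t *ᵥ y` is nonincreasing. -/
theorem sq_norm_nonincreasing
    {d : ℕ} (hd : 1 ≤ d)
    (M : ℝ → Matrix (Fin d) (Fin d) ℝ)
    (hM : ∀ t : ℝ, 0 ≤ t → IsGraphLaplacian (M t) ∧ (M t).IsSymm)
    (y : ℝ → (Fin d → ℝ))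
    (hy : ∀ t : ℝ, 0 ≤ t → HasDerivAt y (M t *ᵥ y t) t) :
    ∀ s t : ℝ, 0 ≤ s → s ≤ t → ∑ i : Fin d, (y t i) ^ 2 ≤ ∑ i : Fin d, (y s i) ^ 2 := by
  set g : ℝ → ℝ := fun t => ∑ i : Fin d, (y t i) ^ 2 with hg_def
  have hg : ∀ t : ℝ, 0 ≤ t →
      HasDerivAt g (∑ i : Fin d, 2 * y t i * (M t *ᵥ y t) i) t := by
    intro t ht
    have hcomp : ∀ i : Fin d, HasDerivAt (fun s => y s i) ((M t *ᵥ y t) i) t :=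
      hasDerivAt_pi.1 (hy t ht)
    have : ∀ i : Fin d, HasDerivAt (fun s => (y s i) ^ 2) (2 * y t i * (M t *ᵥ y t) i) t := by
      intro i
      have := (hcomp i).fun_pow 2
      simpa [mul_comm, mul_assoc, mul_left_comm] using this
    exact HasDerivAt.fun_sum fun i _ => this i
  have hanti : AntitoneOn g (Set.Ici (0 : ℝ)) := by
    apply antitoneOn_of_deriv_nonpos (convex_Ici 0)
    · intro t ht
      exact (hg t ht).continuousAt.continuousWithinAt
    · intro t ht
      rw [interior_Ici] at ht
      exact (hg t (le_of_lt ht)).differentiableAt.differentiableWithinAt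
    · intro t ht
      rw [interior_Ici] at ht
      rw [(hg t (le_of_lt ht)).deriv]
      have h2 : ∑ i : Fin d, 2 * y t i * (M t *ᵥ y t) i
          = 2 * ∑ i : Fin d, y t i * (M t *ᵥ y t) i := by
        rw [Finset.mul_sum]; exact Finset.sum_congr rfl fun i _ => by ring
      rw [h2]
      have := quad_nonpos (M t) (hM t (le_of_lt ht)).1 (hM t (le_of_lt ht)).2 (y t)
      linarith
  intro s t hs hst
  exact hanti hs (le_trans hs hst) hst
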